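/- Let G be a connected finite graph with edge set E (at least two vertices) and let D be its incidence matrix with one row removed. Then R^E = [0,1]^E + (im(D^T) ∩ Z^E) + ker(D), i.e., every vector in R^E can be written as a sum of a point of the unit cube, an integral vector in the row space of D, and a vector in the kernel of D. -/

import Mathlib

open Function

namespace GB

structure Graph where
  V : Type
  E : Type
  [fV : Fintype V]
  [fE : Fintype E]
  [dV : DecidableEq V]
  [dE : DecidableEq E]
  tail : E → V
  head : E → V

attribute [instance] Graph.fV Graph.fE Graph.dV Graph.dE

variable (G : Graph)

/-- Incidence matrix with respect to the reference orientation. -/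
def incMat : Matrix G.V G.E ℝ := fun v e =>
  (if G.head e = v then 1 else 0) - (if G.tail e = v then 1 else 0)

/-- The incidence linear map. -/
noncomputable def DMap : (G.E → ℝ) →ₗ[ℝ] (G.V → ℝ) := (incMat G).mulVecLin

/-- Cycle space: kernel of the incidence matrix (equal to ker of D with a row removed). -/
noncomputable def cycleSpace : Submodule ℝ (G.E → ℝ) := LinearMap.ker (DMap G)

/-- Cocycle space: row space of the incidence matrix (= im(D^T) for connected G). -/
noncomputable def cocycleSpace : Submodule ℝ (G.E → ℝ) :=
  LinearMap.range ((incMat G).transpose.mulVecLin)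

def Connected : Prop :=
  ∀ f : G.V → ℝ, (∀ e, f (G.head e) = f (G.tail e)) → ∀ v w, f v = f w

/-- a {0,±1}-vector -/
def IsZPM (x : G.E → ℝ) : Prop := ∀ e, x e = 0 ∨ x e = 1 ∨ x e = -1

/-- A directed cycle, identified with a support-minimal nonzero {0,±1}-vector of the
cycle space (a signed circuit of the graphic matroid). -/
def IsDirCycle (x : G.E → ℝ) : Prop :=
  x ∈ cycleSpace G ∧ x ≠ 0 ∧ IsZPM G x ∧
    ∀ y ∈ cycleSpace G, y ≠ 0 → support y ⊆ support x → support y = support x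

/-- A directed cocycle (signed cocircuit). -/
def IsDirCocycle (x : G.E → ℝ) : Prop :=
  x ∈ cocycleSpace G ∧ x ≠ 0 ∧ IsZPM G x ∧
    ∀ y ∈ cocycleSpace G, y ≠ 0 → support y ⊆ support x → support y = support x

def IsCycle (C : Set G.E) : Prop := ∃ x, IsDirCycle G x ∧ support x = C
def IsCocycle (C : Set G.E) : Prop := ∃ x, IsDirCocycle G x ∧ support x = C

/-- Orientations are identified with {0,1}-vectors, (1,…,1) being the reference orientation. -/
def IsOrientation (O : G.E → ℝ) : Prop := ∀ e, O e = 0 ∨ O e = 1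

/-- the ±1 direction of edge e in orientation O -/
def dir (O : G.E → ℝ) (e : G.E) : ℝ := 2 * O e - 1

/-- the signed vector x (e.g. a directed cycle or partial orientation) is contained in O -/
def InOrient (x O : G.E → ℝ) : Prop := ∀ e, x e = 0 ∨ x e = dir G O e

def IsIntVec (x : G.E → ℝ) : Prop := ∀ e, ∃ n : ℤ, x e = (n : ℝ)

/-- x is a sum of pairwise edge-disjoint directed cycles -/
def SumDisjDirCycles (x : G.E → ℝ) : Prop :=
  ∃ (n : ℕ) (c : Fin n → (G.E → ℝ)), (∀ i, IsDirCycle G (c i)) ∧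
    (∀ i j, i ≠ j → Disjoint (support (c i)) (support (c j))) ∧ x = ∑ i, c i

/-- x is a sum of pairwise edge-disjoint directed cocycles -/
def SumDisjDirCocycles (x : G.E → ℝ) : Prop :=
  ∃ (n : ℕ) (c : Fin n → (G.E → ℝ)), (∀ i, IsDirCocycle G (c i)) ∧
    (∀ i j, i ≠ j → Disjoint (support (c i)) (support (c j))) ∧ x = ∑ i, c i

/-- A cycle signature: a choice of direction for each cycle. -/
structure CycSig (G : Graph) where
  s : Set G.E → (G.E → ℝ)
  mem : ∀ C, IsCycle G C → IsDirCycle G (s C) ∧ support (s C) = C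

/-- A cocycle signature. -/
structure CocycSig (G : Graph) where
  s : Set G.E → (G.E → ℝ)
  mem : ∀ C, IsCocycle G C → IsDirCocycle G (s C) ∧ support (s C) = C

open Classical in
/-- σ is acyclic: no nontrivial nonnegative combination of the σ(C) vanishes. -/
noncomputable def AcyclicSig (σ : CycSig G) : Prop :=
  ∀ a : Set G.E → ℝ, (∀ C, 0 ≤ a C) →
    ∑ C ∈ Finset.univ.filter (fun C => IsCycle G C), a C • σ.s C = 0 →
    ∀ C, IsCycle G C → a C = 0

open Classical in
noncomputable def AcyclicCosig (σ : CocycSig G) : Prop :=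
  ∀ a : Set G.E → ℝ, (∀ C, 0 ≤ a C) →
    ∑ C ∈ Finset.univ.filter (fun C => IsCocycle G C), a C • σ.s C = 0 →
    ∀ C, IsCocycle G C → a C = 0

/-- O is σ-compatible: every directed cycle in O is the chosen one. -/
def SigCompatible (σ : CycSig G) (O : G.E → ℝ) : Prop :=
  ∀ x, IsDirCycle G x → InOrient G x O → x = σ.s (support x)

def CosigCompatible (σ : CocycSig G) (O : G.E → ℝ) : Prop :=
  ∀ x, IsDirCocycle G x → InOrient G x O → x = σ.s (support x)

def Compatible (σc : CycSig G) (σs : CocycSig G) (O : G.E → ℝ) : Prop :=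
  SigCompatible G σc O ∧ CosigCompatible G σs O

/-- one step of cycle reversal -/
def CycRev (O O' : G.E → ℝ) : Prop :=
  ∃ x, IsDirCycle G x ∧ InOrient G x O ∧ O' = O - x

/-- cycle reversal equivalence -/
def SameCycClass : (G.E → ℝ) → (G.E → ℝ) → Prop := Relation.EqvGen (CycRev G)

/-- one step of cycle or cocycle reversal -/
def CCRev (O O' : G.E → ℝ) : Prop :=
  ∃ x, (IsDirCycle G x ∨ IsDirCocycle G x) ∧ InOrient G x O ∧ O' = O - x

/-- cycle-cocycle reversal equivalence -/
def SameCCClass : (G.E → ℝ) → (G.E → ℝ) → Prop := Relation.EqvGen (CCRev G)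

/-- x is the directed fundamental cycle of e ∉ T, directed along the reference arc of e -/
def FundCycle (T : Finset G.E) (e : G.E) (x : G.E → ℝ) : Prop :=
  IsDirCycle G x ∧ x e = 1 ∧ support x ⊆ insert e (↑T : Set G.E)

/-- x is the directed fundamental cocycle of e ∈ T -/
def FundCocycle (T : Finset G.E) (e : G.E) (x : G.E → ℝ) : Prop :=
  IsDirCocycle G x ∧ x e = 1 ∧ support x ⊆ insert e ((↑T : Set G.E)ᶜ)

/-- T is a spanning tree: it contains no cycle and its complement contains no cocycle. -/
def IsSpanningTree (T : Finset G.E) : Prop :=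
  (∀ x, IsDirCycle G x → ¬ support x ⊆ (↑T : Set G.E)) ∧
  (∀ x, IsDirCocycle G x → ¬ support x ⊆ ((↑T : Set G.E)ᶜ))

/-- O = g_{σ,σ*}(T): each e ∉ T is oriented along σ(C(T,e)), each e ∈ T along σ*(C*(T,e)). -/
def GOrient (σc : CycSig G) (σs : CocycSig G) (T : Finset G.E) (O : G.E → ℝ) : Prop :=
  IsOrientation G O ∧
  (∀ e ∉ T, ∀ x, FundCycle G T e x → dir G O e = σc.s (support x) e) ∧
  (∀ e ∈ T, ∀ x, FundCocycle G T e x → dir G O e = σs.s (support x) e)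

/-- φ_{σ,σ*}(O) = S : O is obtained from the compatible orientation O^cp = g(T) by reversing
disjoint directed cycles c i and cocycles d j, and S = T ∪ (⊎ C_i) \ (⊎ C*_j). -/
def PhiRel (σc : CycSig G) (σs : CocycSig G) (O : G.E → ℝ) (S : Set G.E) : Prop :=
  ∃ (T : Finset G.E) (Ocp : G.E → ℝ) (n m : ℕ)
    (c : Fin n → (G.E → ℝ)) (d : Fin m → (G.E → ℝ)),
    IsSpanningTree G T ∧ Compatible G σc σs Ocp ∧ GOrient G σc σs T Ocp ∧
    (∀ i, IsDirCycle G (c i) ∧ InOrient G (c i) Ocp) ∧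
    (∀ j, IsDirCocycle G (d j) ∧ InOrient G (d j) Ocp) ∧
    (∀ i j, i ≠ j → Disjoint (support (c i)) (support (c j))) ∧
    (∀ i j, i ≠ j → Disjoint (support (d i)) (support (d j))) ∧
    (∀ i j, Disjoint (support (c i)) (support (d j))) ∧
    O = Ocp - (∑ i, c i) - (∑ j, d j) ∧
    S = ((↑T : Set G.E) ∪ (⋃ i, support (c i))) \ (⋃ j, support (d j))


/-- the cube of continuous orientations -/
def cube : Set (G.E → ℝ) := {x | ∀ e, 0 ≤ x e ∧ x e ≤ 1}

/-- x is a σ-compatible continuous orientation -/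
def ContSigCompat (σ : CycSig G) (x : G.E → ℝ) : Prop :=
  x ∈ cube G ∧ ∀ ε : ℝ, 0 < ε → ∀ C, IsCycle G C → x + ε • σ.s C ∉ cube G

/-- S̃_σ = S_σ + (im(D^T) ∩ ℤ^E) -/
def Stilde (σ : CycSig G) : Set (G.E → ℝ) :=
  {x | ∃ s, ContSigCompat G σ s ∧ ∃ v, v ∈ cocycleSpace G ∧ IsIntVec G v ∧ x = s + v}

end GB


namespace StmtAux

/-- penalty: squared distance to [0,1] -/
noncomputable def phi (s : ℝ) : ℝ := (max (s-1) 0)^2 + (max (-s) 0)^2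

/-- derivative of phi / 2 -/
noncomputable def dlt (s : ℝ) : ℝ := max (s-1) 0 - max (-s) 0

lemma phi_nonneg (s : ℝ) : 0 ≤ phi s := by unfold phi; positivity

lemma sqmax_bound (a h : ℝ) : (max (a+h) 0)^2 ≤ (max a 0)^2 + 2*h*(max a 0) + h^2 := by
  simp only [max_def]
  split_ifs <;> nlinarith [sq_nonneg (a+h), sq_nonneg a, sq_nonneg h]

lemma phi_smooth (s h : ℝ) : phi (s+h) ≤ phi s + 2*h*(dlt s) + 2*h^2 := by
  have h1 := sqmax_bound (s-1) h
  have h2 := sqmax_bound (-s) (-h)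
  unfold phi dlt
  have e1 : s + h - 1 = (s-1) + h := by ring
  have e2 : -(s+h) = (-s) + (-h) := by ring
  rw [e1, e2]; nlinarith [h1, h2]

lemma abs_le_of_phi_le {s c : ℝ} (h : phi s ≤ c) : |s| ≤ 2 + c := by
  have hc : 0 ≤ c := le_trans (phi_nonneg s) h
  unfold phi at h
  rcases le_total s 0 with hs | hs
  · have hm : max (-s) 0 = -s := max_eq_left (by linarith)
    rw [hm] at h
    have h2 : (-s)^2 ≤ c := by nlinarith [sq_nonneg (max (s-1) 0)]
    rw [abs_of_nonpos hs]
    nlinarith [sq_nonneg (s+1)]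
  rcases le_total s 1 with hs1 | hs1
  · rw [abs_of_nonneg hs]; linarith
  · have hm : max (s-1) 0 = s-1 := max_eq_left (by linarith)
    rw [hm] at h
    have h2 : (s-1)^2 ≤ c := by nlinarith [sq_nonneg (max (-s) 0)]
    rw [abs_of_nonneg hs]
    nlinarith [sq_nonneg (s-2)]

lemma dlt_eq_zero {s : ℝ} (h : dlt s = 0) : 0 ≤ s ∧ s ≤ 1 := by
  unfold dlt at h
  constructor
  · by_contra hc; push_neg at hc
    rw [max_eq_left (by linarith : (0:ℝ) ≤ -s), max_eq_right (by linarith : s - 1 ≤ 0)] at h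
    linarith
  · by_contra hc; push_neg at hc
    rw [max_eq_left (by linarith : (0:ℝ) ≤ s - 1), max_eq_right (by linarith : -s ≤ 0)] at h
    linarith

lemma one_lt_of_dlt_pos {s : ℝ} (h : 0 < dlt s) : 1 < s := by
  unfold dlt at h
  by_contra hc; push_neg at hc
  rw [max_eq_right (by linarith : s - 1 ≤ 0)] at h
  have := le_max_right (-s) (0:ℝ)
  linarith

lemma neg_of_dlt_neg {s : ℝ} (h : dlt s < 0) : s < 0 := by
  unfold dlt at h
  by_contra hc; push_neg at hc
  rw [max_eq_right (by linarith : -s ≤ 0)] at h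
  have := le_max_right (s-1) (0:ℝ)
  linarith

lemma phi_sub_one_lt {s : ℝ} (h : 1 < s) : phi (s-1) < phi s := by
  unfold phi
  rw [max_eq_right (by linarith : -s ≤ 0), max_eq_right (by linarith : -(s-1) ≤ 0),
    max_eq_left (by linarith : (0:ℝ) ≤ s - 1)]
  rcases le_total (s-1-1) 0 with h1 | h1
  · rw [max_eq_right h1]; nlinarith
  · rw [max_eq_left h1]; nlinarith

lemma phi_add_one_lt {s : ℝ} (h : s < 0) : phi (s+1) < phi s := by
  unfold phi
  rw [max_eq_right (by linarith : s - 1 ≤ 0), max_eq_right (by linarith : s + 1 - 1 ≤ 0),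
    max_eq_left (by linarith : (0:ℝ) ≤ -s)]
  rcases le_total (-(s+1)) 0 with h1 | h1
  · rw [max_eq_right h1]; nlinarith
  · rw [max_eq_left h1]; nlinarith


variable {E : Type} [Fintype E]

noncomputable def Fof (z : E → ℝ) : ℝ := ∑ e, phi (z e)

lemma Fof_nonneg (z : E → ℝ) : 0 ≤ Fof z := Finset.sum_nonneg fun e _ => phi_nonneg _

lemma continuous_Fof : Continuous (Fof (E := E)) := by
  unfold Fof phi
  apply continuous_finset_sum
  intro e _
  fun_prop

lemma abs_le_of_Fof_le {z : E → ℝ} {c : ℝ} (h : Fof z ≤ c) (e : E) : |z e| ≤ 2 + c :=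
  abs_le_of_phi_le (le_trans (Finset.single_le_sum (f := fun e => phi (z e))
    (fun i _ => phi_nonneg _) (Finset.mem_univ e)) h)

lemma Fof_smooth (z w : E → ℝ) (t : ℝ) :
    Fof (z + t • w) ≤ Fof z + 2*t*(∑ e, w e * dlt (z e)) + 2*t^2*(∑ e, (w e)^2) := by
  unfold Fof
  rw [Finset.mul_sum, Finset.mul_sum, ← Finset.sum_add_distrib, ← Finset.sum_add_distrib]
  apply Finset.sum_le_sum
  intro e _
  have h := phi_smooth (z e) (t * w e)
  simp only [Pi.add_apply, Pi.smul_apply, smul_eq_mul]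
  calc phi (z e + t * w e) ≤ phi (z e) + 2*(t*w e)*dlt (z e) + 2*(t*w e)^2 := h
  _ = phi (z e) + 2*t*(w e * dlt (z e)) + 2*t^2*(w e)^2 := by ring

lemma dot_dlt_eq_zero (z w : E → ℝ) (hmin : ∀ t : ℝ, Fof z ≤ Fof (z + t • w)) :
    ∑ e, w e * dlt (z e) = 0 := by
  set c := ∑ e, w e * dlt (z e) with hc
  set W := ∑ e, (w e)^2 with hW
  have hW0 : 0 ≤ W := Finset.sum_nonneg fun e _ => sq_nonneg _
  have key : ∀ t : ℝ, 0 ≤ 2*t*c + 2*t^2*W := by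
    intro t
    have h1 := Fof_smooth z w t
    have h2 := hmin t
    linarith
  rcases eq_or_lt_of_le hW0 with h0 | h0
  · have h1 := key 1
    have h2 := key (-1)
    rw [← h0] at h1 h2
    nlinarith
  · have h1 := key (-c/(2*W))
    have e1 : 2*(-c/(2*W))*c + 2*(-c/(2*W))^2*W = -(c^2/(2*W)) := by
      field_simp
      ring
    rw [e1] at h1
    have h2 : 0 ≤ (-(c^2/(2*W))) * (2*W) := mul_nonneg h1 (by linarith)
    have h3 : (-(c^2/(2*W))) * (2*W) = -c^2 := by field_simp
    rw [h3] at h2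
    nlinarith

open Matrix in
lemma mem_range_transpose_of_perp_ker {α β : Type} [Fintype α] [Fintype β]
    (A : Matrix α β ℝ) (d : β → ℝ)
    (h : ∀ w, A.mulVec w = 0 → d ⬝ᵥ w = 0) :
    d ∈ LinearMap.range (Aᵀ.mulVecLin) := by
  set R := LinearMap.range (Aᵀ.mulVecLin) with hR
  set N := LinearMap.ker (A.mulVecLin) with hN
  have orth : ∀ r ∈ R, ∀ w ∈ N, r ⬝ᵥ w = 0 := by
    rintro r ⟨a, rfl⟩ w hw
    have hw' : A.mulVec w = 0 := by
      have := LinearMap.mem_ker.mp hw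
      rwa [Matrix.mulVecLin_apply] at this
    rw [Matrix.mulVecLin_apply]
    calc Aᵀ.mulVec a ⬝ᵥ w = a ⬝ᵥ A.mulVec w := by
          rw [Matrix.dotProduct_mulVec, Matrix.mulVec_transpose]
    _ = 0 := by rw [hw']; simp
  have hdisj : R ⊓ N = ⊥ := by
    rw [eq_bot_iff]
    rintro y ⟨hyR, hyN⟩
    have hy : y ⬝ᵥ y = 0 := orth y hyR y hyN
    simpa [Submodule.mem_bot] using dotProduct_self_eq_zero.mp hy
  have hdim : Module.finrank ℝ R + Module.finrank ℝ N = Fintype.card β := by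
    have h1 : Module.finrank ℝ R = A.rank := by
      have : Module.finrank ℝ R = Aᵀ.rank := rfl
      rw [this, Matrix.rank_transpose]
    have h2 := LinearMap.finrank_range_add_finrank_ker (A.mulVecLin)
    have h3 : Module.finrank ℝ (LinearMap.range A.mulVecLin) = A.rank := rfl
    rw [h3, Module.finrank_pi] at h2
    rw [h1, ← h2]
  have hsup : R ⊔ N = ⊤ := by
    apply Submodule.eq_top_of_finrank_eq
    have h4 := Submodule.finrank_sup_add_finrank_inf_eq R N
    rw [hdisj, finrank_bot, add_zero] at h4
    rw [h4, hdim, Module.finrank_pi]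
  have hd : d ∈ R ⊔ N := hsup ▸ Submodule.mem_top
  obtain ⟨r, hr, n, hn, hrn⟩ := Submodule.mem_sup.mp hd
  have hn' : A.mulVec n = 0 := by
    have := LinearMap.mem_ker.mp hn
    rwa [Matrix.mulVecLin_apply] at this
  have hdn : d ⬝ᵥ n = 0 := h n hn'
  have hrn0 : r ⬝ᵥ n = 0 := orth r hr n hn
  have hnn : n ⬝ᵥ n = 0 := by
    have he : d ⬝ᵥ n = r ⬝ᵥ n + n ⬝ᵥ n := by rw [← hrn, add_dotProduct]
    rw [hdn, hrn0] at he
    linarith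
  have : n = 0 := dotProduct_self_eq_zero.mp hnn
  rw [← hrn, this, add_zero]
  exact hr

section GraphAux
open GB Matrix

variable (G : GB.Graph)

lemma transpose_incMat_mulVec (ψ : G.V → ℝ) (e : G.E) :
    ((incMat G)ᵀ.mulVec ψ) e = ψ (G.head e) - ψ (G.tail e) := by
  simp only [Matrix.mulVec, Matrix.transpose_apply, dotProduct, incMat, sub_mul, ite_mul,
    one_mul, zero_mul]
  rw [Finset.sum_sub_distrib]
  simp [Finset.sum_ite_eq]

lemma cocycle_dot_cycle {v w : G.E → ℝ} (hv : v ∈ cocycleSpace G) (hw : w ∈ cycleSpace G) :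
    ∑ e, v e * w e = 0 := by
  obtain ⟨a, rfl⟩ := hv
  have hw0 : (incMat G).mulVec w = 0 := by
    have := LinearMap.mem_ker.mp hw
    rwa [DMap, Matrix.mulVecLin_apply] at this
  have h1 : ((incMat G)ᵀ.mulVec a) ⬝ᵥ w = a ⬝ᵥ ((incMat G).mulVec w) := by
    rw [Matrix.dotProduct_mulVec, Matrix.mulVec_transpose]
  rw [hw0] at h1
  simp only [dotProduct_zero] at h1
  exact h1

lemma isIntVec_add {v w : G.E → ℝ} (hv : IsIntVec G v) (hw : IsIntVec G w) :
    IsIntVec G (v + w) := by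
  intro e
  obtain ⟨a, ha⟩ := hv e
  obtain ⟨b, hb⟩ := hw e
  exact ⟨a + b, by simp [ha, hb]⟩

lemma exists_min (x : G.E → ℝ) :
    ∃ z v w, v ∈ cocycleSpace G ∧ IsIntVec G v ∧ w ∈ cycleSpace G ∧ z = x - v - w ∧
      ∀ v' w', v' ∈ cocycleSpace G → IsIntVec G v' → w' ∈ cycleSpace G →
        Fof z ≤ Fof (x - v' - w') := by
  classical
  set c := Fof x with hc
  have hc0 : 0 ≤ c := Fof_nonneg x
  set B : ℝ := (∑ e, (|x e| + 2 + c)^2) + 1 with hB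
  have hB1 : 1 ≤ B := by
    have : 0 ≤ ∑ e, (|x e| + 2 + c)^2 := Finset.sum_nonneg fun e _ => sq_nonneg _
    simp only [hB]; linarith
  set M : ℤ := ⌈B⌉ with hM
  set Q : Set (G.E → ℝ) := {v | (v ∈ cocycleSpace G ∧ IsIntVec G v) ∧
      ∃ w ∈ cycleSpace G, Fof (x - v - w) ≤ c} with hQ
  have hQbound : ∀ v ∈ Q, ∀ e, |v e| ≤ B := by
    rintro v ⟨⟨hvc, hvi⟩, w, hw, hF⟩ e
    have hvw : ∀ e', |v e' + w e'| ≤ |x e'| + 2 + c := by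
      intro e'
      have h1 : |(x - v - w) e'| ≤ 2 + c := abs_le_of_Fof_le hF e'
      simp only [Pi.sub_apply] at h1
      have h2 : v e' + w e' = x e' - (x e' - v e' - w e') := by ring
      rw [h2]
      calc |x e' - (x e' - v e' - w e')| ≤ |x e'| + |x e' - v e' - w e'| := abs_sub _ _
      _ ≤ |x e'| + (2 + c) := by linarith
      _ = |x e'| + 2 + c := by ring
    have horth : ∑ e', v e' * w e' = 0 := cocycle_dot_cycle G hvc hw
    have expand : ∑ e', (v e' + w e')^2
        = (∑ e', (v e')^2) + (∑ e', (w e')^2) + 2*(∑ e', v e' * w e') := by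
      rw [Finset.mul_sum, ← Finset.sum_add_distrib, ← Finset.sum_add_distrib]
      apply Finset.sum_congr rfl
      intro e' _
      ring
    have hw2 : 0 ≤ ∑ e', (w e')^2 := Finset.sum_nonneg fun _ _ => sq_nonneg _
    have hle : ∑ e', (v e')^2 ≤ ∑ e', (v e' + w e')^2 := by
      rw [expand, horth]; linarith
    have hle2 : ∑ e', (v e' + w e')^2 ≤ ∑ e', (|x e'| + 2 + c)^2 := by
      apply Finset.sum_le_sum
      intro e' _
      have h3 := hvw e'
      nlinarith [abs_nonneg (v e' + w e'), sq_abs (v e' + w e')]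
    have hve : (v e)^2 ≤ B - 1 := by
      have h4 : (v e)^2 ≤ ∑ e', (v e')^2 :=
        Finset.single_le_sum (f := fun e' => (v e')^2) (fun _ _ => sq_nonneg _)
          (Finset.mem_univ e)
      simp only [hB]
      linarith
    rcases le_total |v e| 1 with h1 | h1
    · linarith
    · have hp : 0 ≤ |v e| * (|v e| - 1) :=
        mul_nonneg (abs_nonneg _) (by linarith)
      nlinarith [sq_abs (v e)]
  have hQfin : Q.Finite := by
    apply Set.Finite.subset (Set.Finite.image (f := fun (n : G.E → ℤ) => fun e => ((n e : ℝ)))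
      (Set.finite_Icc (fun (_ : G.E) => -M) (fun _ => M)))
    intro v hv
    have hvi := hv.1.2
    have hBM : B ≤ (M : ℝ) := Int.le_ceil B
    refine ⟨fun e => Classical.choose (hvi e), ?_, ?_⟩
    · rw [Set.mem_Icc]
      constructor <;> rw [Pi.le_def] <;> intro e <;>
        [skip; skip]
      · have hspec := (Classical.choose_spec (hvi e)).symm
        have hb := hQbound v hv e
        rw [← hspec] at hb
        have h5 : -(M:ℝ) ≤ ((Classical.choose (hvi e) : ℤ) : ℝ) := by
          have := (abs_le.mp hb).1
          linarith
        exact_mod_cast h5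
      · have hspec := (Classical.choose_spec (hvi e)).symm
        have hb := hQbound v hv e
        rw [← hspec] at hb
        have h5 : ((Classical.choose (hvi e) : ℤ) : ℝ) ≤ (M:ℝ) := by
          have := (abs_le.mp hb).2
          linarith
        exact_mod_cast h5
    · funext e
      exact (Classical.choose_spec (hvi e)).symm
  set Cset : (G.E → ℝ) → Set (G.E → ℝ) :=
    fun v => {z | x - v - z ∈ cycleSpace G ∧ Fof z ≤ c} with hCset
  have hCcpt : ∀ v, IsCompact (Cset v) := by
    intro v
    have h1 : IsClosed {z : G.E → ℝ | x - v - z ∈ cycleSpace G} := by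
      have he : {z : G.E → ℝ | x - v - z ∈ cycleSpace G}
          = (fun z => x - v - z) ⁻¹' ((cycleSpace G : Set (G.E → ℝ))) := rfl
      rw [he]
      exact (Submodule.closed_of_finiteDimensional _).preimage (by fun_prop)
    have h2 : IsClosed {z : G.E → ℝ | Fof z ≤ c} :=
      isClosed_le continuous_Fof continuous_const
    apply IsCompact.of_isClosed_subset
      (isCompact_univ_pi fun (_ : G.E) => isCompact_Icc (a := -(2+c)) (b := 2+c))
      (h1.inter h2)
    intro z hz
    rw [Set.mem_univ_pi]
    intro e
    rw [Set.mem_Icc]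
    exact abs_le.mp (abs_le_of_Fof_le hz.2 e)
  set T := ⋃ v ∈ Q, Cset v with hT
  have hTcpt : IsCompact T := hQfin.isCompact_biUnion fun v _ => hCcpt v
  have h0Q : (0 : G.E → ℝ) ∈ Q := by
    refine ⟨⟨Submodule.zero_mem _, fun e => ⟨0, by simp⟩⟩, 0, Submodule.zero_mem _, ?_⟩
    have : x - 0 - 0 = x := by abel
    rw [this]
  have hxT : x ∈ T := by
    apply Set.mem_biUnion h0Q
    refine ⟨?_, le_refl c⟩
    show x - 0 - x ∈ cycleSpace G
    have : x - 0 - x = 0 := by abel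
    rw [this]
    exact Submodule.zero_mem _
  obtain ⟨z, hzT, hzmin⟩ := hTcpt.exists_isMinOn ⟨x, hxT⟩ continuous_Fof.continuousOn
  obtain ⟨v, hvQ, hzC⟩ := Set.mem_iUnion₂.mp hzT
  refine ⟨z, v, x - v - z, hvQ.1.1, hvQ.1.2, hzC.1, by abel, ?_⟩
  intro v' w' hv'c hv'i hw'
  by_cases hF : Fof (x - v' - w') ≤ c
  · have hv'Q : v' ∈ Q := ⟨⟨hv'c, hv'i⟩, w', hw', hF⟩
    have hmem : (x - v' - w') ∈ T := by
      apply Set.mem_biUnion hv'Q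
      refine ⟨?_, hF⟩
      show x - v' - (x - v' - w') ∈ cycleSpace G
      have : x - v' - (x - v' - w') = w' := by abel
      rw [this]
      exact hw'
    exact hzmin hmem
  · push_neg at hF
    have h1 : Fof z ≤ Fof x := hzmin hxT
    linarith

end GraphAux

end StmtAux

open GB in
theorem stmt_14 (G : GB.Graph) (hconn : GB.Connected G) (hV : 1 < Fintype.card G.V)
    (x : G.E → ℝ) :
    ∃ u v w : G.E → ℝ, u ∈ GB.cube G ∧ v ∈ GB.cocycleSpace G ∧ GB.IsIntVec G v ∧
      w ∈ GB.cycleSpace G ∧ x = u + v + w := by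
  classical
  obtain ⟨z, v, w, hvc, hvi, hw, hz, hmin⟩ := StmtAux.exists_min G x
  set d : G.E → ℝ := fun e => StmtAux.dlt (z e) with hd
  have hperp : ∀ wk, (GB.incMat G).mulVec wk = 0 → dotProduct d wk = 0 := by
    intro wk hwk
    have hwkK : wk ∈ GB.cycleSpace G := by
      apply LinearMap.mem_ker.mpr
      show (GB.incMat G).mulVecLin wk = 0
      rw [Matrix.mulVecLin_apply]
      exact hwk
    have hpt : ∀ t : ℝ, StmtAux.Fof z ≤ StmtAux.Fof (z + t • wk) := by
      intro t
      have hmem : z + t • wk = x - v - (w - t • wk) := by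
        rw [hz]; funext e
        simp only [Pi.add_apply, Pi.sub_apply, Pi.smul_apply, smul_eq_mul]
        ring
      rw [hmem]
      exact hmin v (w - t • wk) hvc hvi
        (Submodule.sub_mem _ hw (Submodule.smul_mem _ _ hwkK))
    have hsum := StmtAux.dot_dlt_eq_zero z wk hpt
    have hcomm : dotProduct d wk = ∑ e, wk e * StmtAux.dlt (z e) := by
      simp only [dotProduct, hd]
      exact Finset.sum_congr rfl fun e _ => mul_comm _ _
    rw [hcomm]
    exact hsum
  obtain ⟨ψ, hψ⟩ := StmtAux.mem_range_transpose_of_perp_ker (GB.incMat G) d hperp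
  have hdlt : ∀ e, StmtAux.dlt (z e) = ψ (G.head e) - ψ (G.tail e) := by
    intro e
    have h1 := congrFun hψ e
    rw [Matrix.mulVecLin_apply, StmtAux.transpose_incMat_mulVec] at h1
    exact h1.symm
  by_cases hconst : ∀ a b : G.V, ψ a = ψ b
  · refine ⟨z, v, w, ?_, hvc, hvi, hw, ?_⟩
    · intro e
      have h0 : StmtAux.dlt (z e) = 0 := by
        rw [hdlt e, hconst (G.head e) (G.tail e), sub_self]
      exact StmtAux.dlt_eq_zero h0
    · rw [hz]; abel
  · exfalso
    push_neg at hconst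
    obtain ⟨a, b, hab⟩ := hconst
    obtain ⟨vm, -, hvm⟩ := Finset.exists_max_image (Finset.univ : Finset G.V) ψ
      ⟨a, Finset.mem_univ a⟩
    set Mv := ψ vm with hMv
    set χ : G.V → ℝ := fun u => if ψ u = Mv then 1 else 0 with hχ
    set v₀ := (GB.incMat G).transpose.mulVec χ with hv₀
    have hv₀e : ∀ e, v₀ e = χ (G.head e) - χ (G.tail e) :=
      fun e => StmtAux.transpose_incMat_mulVec G χ e
    have hlow : ∃ u, ψ u ≠ Mv := by
      by_contra hno; push_neg at hno
      exact hab ((hno a).trans (hno b).symm)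
    obtain ⟨u, hu⟩ := hlow
    have hcross : ∃ e, χ (G.head e) ≠ χ (G.tail e) := by
      by_contra hno; push_neg at hno
      have hcst := hconn χ hno vm u
      simp only [hχ, if_pos rfl, if_neg hu] at hcst
      simp [hMv] at hcst
    obtain ⟨e₀, he₀⟩ := hcross
    have hedge : ∀ e, StmtAux.phi (z e - v₀ e) ≤ StmtAux.phi (z e) ∧
        (χ (G.head e) ≠ χ (G.tail e) → StmtAux.phi (z e - v₀ e) < StmtAux.phi (z e)) := by
      intro e
      have hψh : ψ (G.head e) ≤ Mv := hvm (G.head e) (Finset.mem_univ _)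
      have hψt : ψ (G.tail e) ≤ Mv := hvm (G.tail e) (Finset.mem_univ _)
      by_cases h1 : ψ (G.head e) = Mv <;> by_cases h2 : ψ (G.tail e) = Mv
      · have hz0 : v₀ e = 0 := by rw [hv₀e]; simp [hχ, h1, h2]
        rw [hz0, sub_zero]
        refine ⟨le_refl _, fun hne => absurd ?_ hne⟩
        simp [hχ, h1, h2]
      · have hz1 : v₀ e = 1 := by rw [hv₀e]; simp [hχ, h1, h2]
        have hdpos : 0 < StmtAux.dlt (z e) := by
          rw [hdlt e, h1]
          have : ψ (G.tail e) < Mv := lt_of_le_of_ne hψt h2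
          linarith
        have hzgt := StmtAux.one_lt_of_dlt_pos hdpos
        have hlt := StmtAux.phi_sub_one_lt hzgt
        rw [hz1]
        exact ⟨le_of_lt hlt, fun _ => hlt⟩
      · have hz1 : v₀ e = -1 := by rw [hv₀e]; simp [hχ, h1, h2]
        have hdneg : StmtAux.dlt (z e) < 0 := by
          rw [hdlt e, h2]
          have : ψ (G.head e) < Mv := lt_of_le_of_ne hψh h1
          linarith
        have hzlt := StmtAux.neg_of_dlt_neg hdneg
        have hlt := StmtAux.phi_add_one_lt hzlt
        rw [hz1, sub_neg_eq_add]
        exact ⟨le_of_lt hlt, fun _ => hlt⟩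
      · have hz0 : v₀ e = 0 := by rw [hv₀e]; simp [hχ, h1, h2]
        rw [hz0, sub_zero]
        refine ⟨le_refl _, fun hne => absurd ?_ hne⟩
        simp [hχ, h1, h2]
    have hlt : StmtAux.Fof (z - v₀) < StmtAux.Fof z := by
      unfold StmtAux.Fof
      apply Finset.sum_lt_sum
      · intro e _
        simpa using (hedge e).1
      · exact ⟨e₀, Finset.mem_univ e₀, by simpa using (hedge e₀).2 he₀⟩
    have hv₀c : v₀ ∈ GB.cocycleSpace G := ⟨χ, Matrix.mulVecLin_apply _ _⟩
    have hv₀i : GB.IsIntVec G v₀ := by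
      intro e
      refine ⟨(if ψ (G.head e) = Mv then 1 else 0) - (if ψ (G.tail e) = Mv then 1 else 0), ?_⟩
      rw [hv₀e]
      simp only [hχ]
      push_cast
      split_ifs <;> norm_num
    have hmem := hmin (v + v₀) w (Submodule.add_mem _ hvc hv₀c)
      (StmtAux.isIntVec_add G hvi hv₀i) hw
    have heq : x - (v + v₀) - w = z - v₀ := by
      rw [hz]; abel
    rw [heq] at hmem
    linarith
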